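/- Fix n ≥ p ≥ 1. There exists a constant C > 0 such that for every X ∈ St(n,p) and every real n×p matrix E with ‖E‖₂ ≤ 1/2, the matrix X + E has full column rank (so its polar projection P(X+E) is defined) and ‖P(X+E) − (X + E − (1/2)XXᵀE − (1/2)XEᵀX)‖_F ≤ C·‖E‖_F². -/

import Mathlib

open Matrix

noncomputable def specNorm {m n : Type*} [Fintype m] [Fintype n] [DecidableEq n]
    (A : Matrix m n ℝ) : ℝ :=
  ‖LinearMap.toContinuousLinearMap (Matrix.toEuclideanLin A)‖

noncomputable def frobNorm {m n : Type*} [Fintype m] [Fintype n] (A : Matrix m n ℝ) : ℝ :=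
  Real.sqrt (∑ i, ∑ j, (A i j) ^ 2)

section Frob
variable {l m n : Type*} [Fintype l] [Fintype m] [Fintype n]

attribute [local instance] Matrix.frobeniusNormedAddCommGroup Matrix.frobeniusNormedSpace

lemma frobNorm_eq_norm (A : Matrix m n ℝ) : frobNorm A = ‖A‖ := by
  rw [frobNorm, Matrix.frobenius_norm_def, ← Real.sqrt_eq_rpow]
  congr 1
  refine Finset.sum_congr rfl fun i _ => Finset.sum_congr rfl fun j _ => ?_
  rw [Real.rpow_two, Real.norm_eq_abs, sq_abs]

lemma frobNorm_nonneg (A : Matrix m n ℝ) : 0 ≤ frobNorm A := Real.sqrt_nonneg _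

lemma frobNorm_mul (A : Matrix l m ℝ) (B : Matrix m n ℝ) :
    frobNorm (A * B) ≤ frobNorm A * frobNorm B := by
  simp only [frobNorm_eq_norm]; exact Matrix.frobenius_norm_mul A B

lemma frobNorm_add (A B : Matrix m n ℝ) : frobNorm (A + B) ≤ frobNorm A + frobNorm B := by
  simp only [frobNorm_eq_norm]; exact norm_add_le A B

lemma frobNorm_sub (A B : Matrix m n ℝ) : frobNorm (A - B) ≤ frobNorm A + frobNorm B := by
  simp only [frobNorm_eq_norm]; exact norm_sub_le A B

lemma frobNorm_smul (c : ℝ) (A : Matrix m n ℝ) : frobNorm (c • A) = |c| * frobNorm A := by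
  simp only [frobNorm_eq_norm]
  rw [norm_smul, Real.norm_eq_abs]

lemma frobNorm_transpose (A : Matrix m n ℝ) : frobNorm Aᵀ = frobNorm A := by
  simp only [frobNorm_eq_norm]; exact Matrix.frobenius_norm_transpose A

end Frob

set_option linter.unusedSectionVars false
section Spec
open scoped Matrix.Norms.L2Operator
variable {l m n : Type*} [Fintype l] [Fintype m] [Fintype n]
  [DecidableEq l] [DecidableEq m] [DecidableEq n]

lemma specNorm_eq_norm (A : Matrix m n ℝ) : specNorm A = ‖A‖ := rfl

lemma specNorm_nonneg (A : Matrix m n ℝ) : 0 ≤ specNorm A := norm_nonneg (E := Matrix m n ℝ) A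

lemma specNorm_mul (A : Matrix m n ℝ) (B : Matrix n l ℝ) :
    specNorm (A * B) ≤ specNorm A * specNorm B := Matrix.l2_opNorm_mul A B

lemma specNorm_mulVec (A : Matrix m n ℝ) (x : EuclideanSpace ℝ n) :
    ‖(EuclideanSpace.equiv m ℝ).symm <| A *ᵥ x‖ ≤ specNorm A * ‖x‖ :=
  Matrix.l2_opNorm_mulVec A x

end Spec

section Euclid
set_option linter.unusedSectionVars false
variable {m n : Type*} [Fintype m] [Fintype n] [DecidableEq m] [DecidableEq n]

open scoped RealInnerProductSpace

noncomputable def ev {m : Type*} [Fintype m] (v : m → ℝ) : EuclideanSpace ℝ m :=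
  (WithLp.equiv 2 (m → ℝ)).symm v

lemma ev_norm (v : m → ℝ) : ‖ev v‖ = Real.sqrt (v ⬝ᵥ v) := by
  rw [EuclideanSpace.norm_eq]
  congr 1
  simp [ev, dotProduct, Real.norm_eq_abs, sq_abs, pow_two]

lemma ev_inner (v w : m → ℝ) : ⟪ev v, ev w⟫ = v ⬝ᵥ w := by
  simp [ev, PiLp.inner_apply, dotProduct, RCLike.inner_apply, mul_comm]

lemma ev_norm_sq (v : m → ℝ) : ‖ev v‖ ^ 2 = v ⬝ᵥ v := by
  rw [ev_norm, Real.sq_sqrt]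
  exact Finset.sum_nonneg fun i _ => mul_self_nonneg _

lemma specNorm_mulVec' (A : Matrix m n ℝ) (x : n → ℝ) :
    ‖ev (A *ᵥ x)‖ ≤ specNorm A * ‖ev x‖ :=
  specNorm_mulVec A (ev x)

lemma dot_transpose_mul_self (A : Matrix m n ℝ) (x : n → ℝ) :
    x ⬝ᵥ ((Aᵀ * A) *ᵥ x) = (A *ᵥ x) ⬝ᵥ (A *ᵥ x) := by
  rw [← Matrix.mulVec_mulVec, Matrix.dotProduct_mulVec, Matrix.vecMul_transpose]

end Euclid

section Coercive
set_option linter.unusedSectionVars false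
variable {m n : Type*} [Fintype m] [Fintype n] [DecidableEq m] [DecidableEq n]
open scoped RealInnerProductSpace

lemma ev_zero : ‖ev ((0 : m → ℝ))‖ = 0 := by rw [ev_norm]; simp

lemma isUnit_of_coercive (P : Matrix m m ℝ) (α : ℝ) (hα : 0 < α)
    (h : ∀ x : m → ℝ, α * ‖ev x‖ ≤ ‖ev (P *ᵥ x)‖) :
    IsUnit P ∧ specNorm P⁻¹ ≤ α⁻¹ := by
  have hinj : Function.Injective P.mulVec := by
    intro x y hxy
    have h0 : P *ᵥ (x - y) = 0 := by rw [Matrix.mulVec_sub, hxy, sub_self]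
    have h1 := h (x - y)
    rw [h0, ev_zero] at h1
    have h3 : ‖ev (x - y)‖ = 0 := by nlinarith [norm_nonneg (ev (x - y))]
    have h4 : ev (x - y) = 0 := norm_eq_zero.mp h3
    have h5 : x - y = 0 := by
      have := congrArg (WithLp.equiv 2 (m → ℝ)) h4
      simpa [ev] using this
    exact sub_eq_zero.mp h5
  have hunit : IsUnit P := Matrix.mulVec_injective_iff_isUnit.mp hinj
  refine ⟨hunit, ?_⟩
  have hdet : IsUnit P.det := P.isUnit_iff_isUnit_det.mp hunit
  refine ContinuousLinearMap.opNorm_le_bound _ (by positivity) fun x => ?_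
  set v : m → ℝ := (WithLp.equiv 2 (m → ℝ)) x with hv
  have hxv : x = ev v := rfl
  have happ : (LinearMap.toContinuousLinearMap (Matrix.toEuclideanLin P⁻¹)) x
      = ev (P⁻¹ *ᵥ v) := rfl
  have hPv : P *ᵥ (P⁻¹ *ᵥ v) = v := by
    rw [Matrix.mulVec_mulVec, Matrix.mul_nonsing_inv P hdet, Matrix.one_mulVec]
  have h1 := h (P⁻¹ *ᵥ v)
  rw [hPv] at h1
  rw [happ, hxv]
  rw [inv_mul_eq_div, le_div_iff₀ hα]
  linarith [h1]

lemma coercive_of_dot (P : Matrix m m ℝ) (x : m → ℝ)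
    (h : ‖ev x‖ ^ 2 ≤ x ⬝ᵥ (P *ᵥ x)) : ‖ev x‖ ≤ ‖ev (P *ᵥ x)‖ := by
  have hCS : x ⬝ᵥ (P *ᵥ x) ≤ ‖ev x‖ * ‖ev (P *ᵥ x)‖ := by
    rw [← ev_inner]; exact real_inner_le_norm _ _
  nlinarith [norm_nonneg (ev x), norm_nonneg (ev (P *ᵥ x))]

end Coercive

section Mixed
set_option linter.unusedSectionVars false
variable {m n : Type*} [Fintype m] [Fintype n] [DecidableEq m] [DecidableEq n]

lemma frobNorm_le_sqrt_card (A : Matrix m n ℝ) :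
    frobNorm A ≤ Real.sqrt (Fintype.card n) * specNorm A := by
  have hj : ∀ j, ∑ i, A i j ^ 2 ≤ specNorm A ^ 2 := by
    intro j
    have h1 := specNorm_mulVec' A (Pi.single j 1)
    have h2 : ‖ev (Pi.single j (1 : ℝ))‖ = 1 := by
      rw [ev_norm]; simp
    have h3 : ‖ev (A *ᵥ Pi.single j (1 : ℝ))‖ ^ 2 = ∑ i, A i j ^ 2 := by
      rw [ev_norm_sq]
      simp [dotProduct, Matrix.mulVec_single, pow_two]
    rw [h2, mul_one] at h1
    nlinarith [norm_nonneg (ev (A *ᵥ Pi.single j (1 : ℝ))), specNorm_nonneg A]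
  have key : ∑ i, ∑ j, A i j ^ 2 ≤ (Fintype.card n) * specNorm A ^ 2 := by
    rw [Finset.sum_comm]
    calc ∑ j, ∑ i, A i j ^ 2 ≤ ∑ _j : n, specNorm A ^ 2 :=
          Finset.sum_le_sum fun j _ => hj j
      _ = (Fintype.card n) * specNorm A ^ 2 := by
          rw [Finset.sum_const, Finset.card_univ, nsmul_eq_mul]
  calc frobNorm A ≤ Real.sqrt ((Fintype.card n) * specNorm A ^ 2) := Real.sqrt_le_sqrt key
    _ = Real.sqrt (Fintype.card n) * specNorm A := by
        rw [Real.sqrt_mul (by positivity), Real.sqrt_sq (specNorm_nonneg A)]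

lemma frobNorm_eq_sqrt_trace (A : Matrix m n ℝ) :
    frobNorm A = Real.sqrt (Aᵀ * A).trace := by
  rw [frobNorm, Matrix.trace, Finset.sum_comm (s := Finset.univ) (t := Finset.univ)]
  congr 1
  refine Finset.sum_congr rfl fun j _ => ?_
  simp [Matrix.diag, Matrix.mul_apply, pow_two]

lemma frobNorm_one : frobNorm (1 : Matrix m m ℝ) = Real.sqrt (Fintype.card m) := by
  rw [frobNorm_eq_sqrt_trace]
  simp

end Mixed

section
open scoped ComplexOrder

/-- The square root of a positive semidefinite matrix, as defined in the older Mathlib. -/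
noncomputable def Matrix.PosSemidef.sqrt {n 𝕜 : Type*} [Fintype n] [DecidableEq n] [RCLike 𝕜]
    {A : Matrix n n 𝕜} (hA : A.PosSemidef) : Matrix n n 𝕜 :=
  hA.1.eigenvectorUnitary.1 * diagonal ((↑) ∘ (√·) ∘ hA.1.eigenvalues) *
  (star hA.1.eigenvectorUnitary : Matrix n n 𝕜)

end

lemma Matrix.PosSemidef.posSemidef_sqrt {n : Type*} [Fintype n] [DecidableEq n]
    {A : Matrix n n ℝ} (hA : A.PosSemidef) : hA.sqrt.PosSemidef := by
  unfold Matrix.PosSemidef.sqrt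
  rw [Matrix.star_eq_conjTranspose]
  apply Matrix.PosSemidef.mul_mul_conjTranspose_same
  apply Matrix.PosSemidef.diagonal
  intro i
  exact Real.sqrt_nonneg _

lemma Matrix.PosSemidef.sqrt_mul_self {n : Type*} [Fintype n] [DecidableEq n]
    {A : Matrix n n ℝ} (hA : A.PosSemidef) : hA.sqrt * hA.sqrt = A := by
  unfold Matrix.PosSemidef.sqrt
  have hU : (star hA.1.eigenvectorUnitary : Matrix n n ℝ) * hA.1.eigenvectorUnitary.1 = 1 :=
    Unitary.coe_star_mul_self _
  have hD : diagonal ((RCLike.ofReal : ℝ → ℝ) ∘ (√·) ∘ hA.1.eigenvalues) * diagonal ((RCLike.ofReal : ℝ → ℝ) ∘ (√·) ∘ hA.1.eigenvalues)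
      = diagonal (RCLike.ofReal ∘ hA.1.eigenvalues : n → ℝ) := by
    rw [Matrix.diagonal_mul_diagonal]
    congr 1
    funext i
    simp [Real.mul_self_sqrt (hA.eigenvalues_nonneg i)]
  conv_rhs => rw [hA.1.spectral_theorem, Unitary.conjStarAlgAut_apply]
  calc _ = hA.1.eigenvectorUnitary.1 * (diagonal ((RCLike.ofReal : ℝ → ℝ) ∘ (√·) ∘ hA.1.eigenvalues) *
        ((star hA.1.eigenvectorUnitary : Matrix n n ℝ) * hA.1.eigenvectorUnitary.1) *
        diagonal ((RCLike.ofReal : ℝ → ℝ) ∘ (√·) ∘ hA.1.eigenvalues)) *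
        (star hA.1.eigenvectorUnitary : Matrix n n ℝ) := by simp only [Matrix.mul_assoc]
    _ = _ := by rw [hU, Matrix.mul_one, hD]

/-- Polar projection `P(Z) = Z (ZᵀZ)^{-1/2}` onto the Stiefel manifold. -/
noncomputable def polarProj {n p : ℕ} (Z : Matrix (Fin n) (Fin p) ℝ) : Matrix (Fin n) (Fin p) ℝ :=
  Z * (Matrix.PosSemidef.sqrt (Matrix.posSemidef_conjTranspose_mul_self Z))⁻¹

set_option maxHeartbeats 1000000 in
/-- First-order expansion (with second-order error) of the polar projection of a
perturbation `X + E` of a Stiefel matrix `X`. -/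
theorem stmt3 (n p : ℕ) (hp : 1 ≤ p) (hnp : p ≤ n) :
    ∃ C : ℝ, 0 < C ∧
      ∀ X : Matrix (Fin n) (Fin p) ℝ, Xᵀ * X = 1 →
        ∀ E : Matrix (Fin n) (Fin p) ℝ, specNorm E ≤ 1 / 2 →
          (X + E).rank = p ∧
          frobNorm (polarProj (X + E) -
              (X + E - (1 / 2 : ℝ) • (X * Xᵀ * E) - (1 / 2 : ℝ) • (X * Eᵀ * X)))
            ≤ C * frobNorm E ^ 2 := by
  classical
  have hp0 : (0:ℝ) < p := by exact_mod_cast hp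
  refine ⟨74 * (p:ℝ)^4, by positivity, ?_⟩
  intro X hX E hE
  set q : ℝ := Real.sqrt p with hqdef
  have hq0 : 0 ≤ q := Real.sqrt_nonneg _
  have hq2 : q ^ 2 = p := Real.sq_sqrt (le_of_lt hp0)
  have hq1 : 1 ≤ q := by nlinarith [hp0, hp, (by exact_mod_cast hp : (1:ℝ) ≤ p)]
  set e : ℝ := frobNorm E with hedef
  have he0 : 0 ≤ e := frobNorm_nonneg E
  have hcard : (Fintype.card (Fin p) : ℝ) = p := by simp
  -- spectral facts
  have hM := Matrix.posSemidef_conjTranspose_mul_self (X + E)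
  set R : Matrix (Fin p) (Fin p) ℝ := hM.sqrt with hRdef
  have hpolar : polarProj (X + E) = (X + E) * R⁻¹ := rfl
  have hZT : (X + E)ᴴ = (X + E)ᵀ := Matrix.conjTranspose_eq_transpose_of_trivial _
  have hRR : R * R = (X + E)ᵀ * (X + E) := by
    rw [← hZT]; exact hM.sqrt_mul_self
  have hRpsd : R.PosSemidef := hM.posSemidef_sqrt
  have hRsym : Rᵀ = R := by
    rw [← Matrix.conjTranspose_eq_transpose_of_trivial]
    exact hRpsd.1
  clear_value R
  -- coercivity of X, E, X+E
  have hXiso : ∀ x : Fin p → ℝ, ‖ev (X *ᵥ x)‖ = ‖ev x‖ := by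
    intro x
    rw [ev_norm, ev_norm, ← dot_transpose_mul_self, hX, Matrix.one_mulVec]
  have hEsm : ∀ x : Fin p → ℝ, ‖ev (E *ᵥ x)‖ ≤ (1/2) * ‖ev x‖ := by
    intro x
    refine (specNorm_mulVec' E x).trans ?_
    exact mul_le_mul_of_nonneg_right hE (norm_nonneg _)
  have hZco : ∀ x : Fin p → ℝ, (1/2) * ‖ev x‖ ≤ ‖ev ((X + E) *ᵥ x)‖ := by
    intro x
    have hsplit : (X + E) *ᵥ x = X *ᵥ x + E *ᵥ x := Matrix.add_mulVec _ _ _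
    have hev : ev (X *ᵥ x + E *ᵥ x) = ev (X *ᵥ x) + ev (E *ᵥ x) := rfl
    have h1 : ‖ev (X *ᵥ x)‖ ≤ ‖ev (X *ᵥ x) + ev (E *ᵥ x)‖ + ‖ev (E *ᵥ x)‖ := by
      have := norm_add_le (ev (X *ᵥ x) + ev (E *ᵥ x)) (-(ev (E *ᵥ x)))
      simpa using this
    rw [hsplit, hev]
    have h2 := hXiso x
    have h3 := hEsm x
    linarith
  -- coercivity of R
  have hRco : ∀ x : Fin p → ℝ, (1/2) * ‖ev x‖ ≤ ‖ev (R *ᵥ x)‖ := by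
    intro x
    have h1 : ‖ev (R *ᵥ x)‖ ^ 2 = ‖ev ((X + E) *ᵥ x)‖ ^ 2 := by
      rw [ev_norm_sq, ev_norm_sq, ← dot_transpose_mul_self, ← dot_transpose_mul_self,
        hRsym, hRR]
    have h2 := hZco x
    nlinarith [norm_nonneg (ev (R *ᵥ x)), norm_nonneg (ev ((X + E) *ᵥ x)),
      norm_nonneg (ev x)]
  obtain ⟨hRu, hRinv⟩ := isUnit_of_coercive R (1/2) one_half_pos hRco
  have hRinv2 : specNorm R⁻¹ ≤ 2 := by norm_num at hRinv; exact hRinv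
  -- coercivity of R + 1
  have hR1co : ∀ x : Fin p → ℝ, 1 * ‖ev x‖ ≤ ‖ev ((R + 1) *ᵥ x)‖ := by
    intro x
    rw [one_mul]
    refine coercive_of_dot (R + 1) x ?_
    have hpos : 0 ≤ x ⬝ᵥ (R *ᵥ x) := by
      have := hRpsd.re_dotProduct_nonneg x
      simpa using this
    have : x ⬝ᵥ ((R + 1) *ᵥ x) = x ⬝ᵥ (R *ᵥ x) + x ⬝ᵥ x := by
      rw [Matrix.add_mulVec, dotProduct_add, Matrix.one_mulVec]
    rw [this, ev_norm_sq]
    linarith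
  obtain ⟨hR1u, hR1inv⟩ := isUnit_of_coercive (R + 1) 1 one_pos hR1co
  have hR1inv1 : specNorm (R + 1)⁻¹ ≤ 1 := by norm_num at hR1inv; exact hR1inv
  -- rank
  have hrank : (X + E).rank = p := by
    have h1 : ((X + E)ᵀ * (X + E)).rank = (X + E).rank :=
      Matrix.rank_transpose_mul_self (X + E)
    have h2 : IsUnit ((X + E)ᵀ * (X + E)) := by rw [← hRR]; exact hRu.mul hRu
    have h3 := Matrix.rank_of_isUnit _ h2
    rw [h1] at h3
    simpa using h3
  refine ⟨hrank, ?_⟩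
  -- algebraic identities
  have hRdet : IsUnit R.det := R.isUnit_iff_isUnit_det.mp hRu
  have hR1det : IsUnit (R + 1).det := (R + 1).isUnit_iff_isUnit_det.mp hR1u
  have hAR : R⁻¹ * R = 1 := Matrix.nonsing_inv_mul R hRdet
  set S : Matrix (Fin p) (Fin p) ℝ := (X + E)ᵀ * (X + E) - 1 with hSdef
  clear_value S
  have hSRR : S = R * R - 1 := by rw [hSdef, hRR]
  set G : Matrix (Fin p) (Fin p) ℝ := (R + 1)⁻¹ * S with hGdef
  clear_value G
  have hG : G = R - 1 := by
    have h1 : (R + 1) * (R - 1) = S := by rw [hSRR]; noncomm_ring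
    rw [hGdef, ← h1, ← mul_assoc, Matrix.nonsing_inv_mul _ hR1det, one_mul]
  have hX' : R⁻¹ - 1 + (1/2 : ℝ) • S
      = (1/2 : ℝ) • (R⁻¹ * (G * (G * (R + 1 + 1)))) := by
    rw [hG]
    have e1 : R⁻¹ * ((R - 1) * ((R - 1) * (R + 1 + 1)))
        = R⁻¹ * (R * (R * R)) - R⁻¹ * R - R⁻¹ * R - R⁻¹ * R + R⁻¹ + R⁻¹ := by
      noncomm_ring
    have e2 : R⁻¹ * (R * (R * R)) = R * R := by rw [← mul_assoc, hAR, one_mul]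
    rw [e1, e2, hAR, hSRR]
    module
  have hS : S = Xᵀ * E + Eᵀ * X + Eᵀ * E := by
    rw [hSdef, Matrix.transpose_add, Matrix.add_mul, Matrix.mul_add, Matrix.mul_add, hX]
    abel
  have hErr : (X + E) * R⁻¹ -
        (X + E - (1/2 : ℝ) • (X * Xᵀ * E) - (1/2 : ℝ) • (X * Eᵀ * X))
      = (X + E) * (R⁻¹ - 1 + (1/2 : ℝ) • S)
        - (1/2 : ℝ) • (E * S) - (1/2 : ℝ) • (X * (Eᵀ * E)) := by
    rw [hS]
    simp only [Matrix.mul_add, Matrix.add_mul, Matrix.mul_sub, Matrix.sub_mul,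
      Matrix.mul_smul, Matrix.smul_mul, smul_add, smul_sub, Matrix.mul_one,
      Matrix.one_mul, Matrix.mul_assoc]
    abel
  -- Frobenius norm bounds
  have hcq : Real.sqrt ((Fintype.card (Fin p) : ℕ) : ℝ) = q := by
    rw [hqdef]; simp
  have hXF : frobNorm X = q := by
    rw [frobNorm_eq_sqrt_trace, hX, hqdef]
    simp
  have hspecE0 := specNorm_nonneg E
  have heq2 : e ≤ q * (1/2) := by
    have h := frobNorm_le_sqrt_card E
    rw [hcq, ← hedef] at h
    have h2 := mul_le_mul_of_nonneg_left hE hq0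
    linarith
  have heq : e ≤ q := by linarith
  have hZF : frobNorm (X + E) ≤ 2 * q := by
    have h := frobNorm_add X E
    rw [hXF, ← hedef] at h
    linarith
  have hRF : frobNorm R ≤ 2 * q := by
    have h : frobNorm R = frobNorm (X + E) := by
      rw [frobNorm_eq_sqrt_trace R, frobNorm_eq_sqrt_trace (X + E), hRsym, hRR]
    rw [h]; exact hZF
  have hSF : frobNorm S ≤ 3 * q * e := by
    rw [hS]
    have h1 := frobNorm_add (Xᵀ * E + Eᵀ * X) (Eᵀ * E)
    have h2 := frobNorm_add (Xᵀ * E) (Eᵀ * X)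
    have h3 : frobNorm (Xᵀ * E) ≤ q * e := by
      have h := frobNorm_mul Xᵀ E
      rwa [frobNorm_transpose, hXF, ← hedef] at h
    have h4 : frobNorm (Eᵀ * X) ≤ e * q := by
      have h := frobNorm_mul Eᵀ X
      rwa [frobNorm_transpose, hXF, ← hedef] at h
    have h5 : frobNorm (Eᵀ * E) ≤ e * e := by
      have h := frobNorm_mul Eᵀ E
      rwa [frobNorm_transpose, ← hedef] at h
    have h8 := mul_le_mul_of_nonneg_right heq he0
    linarith
  have hAF : frobNorm R⁻¹ ≤ 2 * q := by
    have h := frobNorm_le_sqrt_card R⁻¹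
    rw [hcq] at h
    have h2 := mul_le_mul_of_nonneg_left hRinv2 hq0
    linarith
  have hR1F : frobNorm (R + 1)⁻¹ ≤ q := by
    have h := frobNorm_le_sqrt_card (R + 1)⁻¹
    rw [hcq] at h
    have h2 := mul_le_mul_of_nonneg_left hR1inv1 hq0
    linarith
  have h1F : frobNorm (1 : Matrix (Fin p) (Fin p) ℝ) = q := by
    rw [frobNorm_one, hcq]
  have hR2F : frobNorm (R + 1 + 1) ≤ 4 * q := by
    have h1 := frobNorm_add (R + 1) (1 : Matrix (Fin p) (Fin p) ℝ)
    have h2 := frobNorm_add R (1 : Matrix (Fin p) (Fin p) ℝ)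
    rw [h1F] at h1 h2
    linarith
  have h3q2e : (0:ℝ) ≤ 3 * q ^ 2 * e :=
    mul_nonneg (mul_nonneg (by norm_num) (sq_nonneg q)) he0
  have h2q : (0:ℝ) ≤ 2 * q := by linarith
  have hGF : frobNorm G ≤ 3 * q ^ 2 * e := by
    rw [hGdef]
    calc frobNorm ((R + 1)⁻¹ * S) ≤ frobNorm (R + 1)⁻¹ * frobNorm S := frobNorm_mul _ _
      _ ≤ q * (3 * q * e) := mul_le_mul hR1F hSF (frobNorm_nonneg S) hq0
      _ = 3 * q ^ 2 * e := by ring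
  have hb3 : frobNorm (G * (R + 1 + 1)) ≤ 12 * q ^ 3 * e := by
    calc frobNorm (G * (R + 1 + 1)) ≤ frobNorm G * frobNorm (R + 1 + 1) := frobNorm_mul _ _
      _ ≤ (3 * q ^ 2 * e) * (4 * q) := mul_le_mul hGF hR2F (frobNorm_nonneg _) h3q2e
      _ = 12 * q ^ 3 * e := by ring
  have h12q3e : (0:ℝ) ≤ 12 * q ^ 3 * e :=
    mul_nonneg (mul_nonneg (by norm_num) (pow_nonneg hq0 3)) he0
  have hb2 : frobNorm (G * (G * (R + 1 + 1))) ≤ 36 * q ^ 5 * e ^ 2 := by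
    calc frobNorm (G * (G * (R + 1 + 1)))
        ≤ frobNorm G * frobNorm (G * (R + 1 + 1)) := frobNorm_mul _ _
      _ ≤ (3 * q ^ 2 * e) * (12 * q ^ 3 * e) := mul_le_mul hGF hb3 (frobNorm_nonneg _) h3q2e
      _ = 36 * q ^ 5 * e ^ 2 := by ring
  have hb1 : frobNorm (R⁻¹ * (G * (G * (R + 1 + 1)))) ≤ 72 * q ^ 6 * e ^ 2 := by
    calc frobNorm (R⁻¹ * (G * (G * (R + 1 + 1))))
        ≤ frobNorm R⁻¹ * frobNorm (G * (G * (R + 1 + 1))) := frobNorm_mul _ _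
      _ ≤ (2 * q) * (36 * q ^ 5 * e ^ 2) := mul_le_mul hAF hb2 (frobNorm_nonneg _) h2q
      _ = 72 * q ^ 6 * e ^ 2 := by ring
  have hX'F : frobNorm (R⁻¹ - 1 + (1/2 : ℝ) • S) ≤ 36 * q ^ 6 * e ^ 2 := by
    rw [hX', frobNorm_smul]
    rw [abs_of_pos (by norm_num : (0:ℝ) < (1/2 : ℝ))]
    linarith
  -- final assembly
  rw [hpolar, hErr]
  have hf1 : frobNorm ((X + E) * (R⁻¹ - 1 + (1/2 : ℝ) • S)) ≤ 72 * q ^ 7 * e ^ 2 := by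
    calc frobNorm ((X + E) * (R⁻¹ - 1 + (1/2 : ℝ) • S))
        ≤ frobNorm (X + E) * frobNorm (R⁻¹ - 1 + (1/2 : ℝ) • S) := frobNorm_mul _ _
      _ ≤ (2 * q) * (36 * q ^ 6 * e ^ 2) := mul_le_mul hZF hX'F (frobNorm_nonneg _) h2q
      _ = 72 * q ^ 7 * e ^ 2 := by ring
  have hf2 : frobNorm ((1/2 : ℝ) • (E * S)) ≤ (3/2) * q * e ^ 2 := by
    rw [frobNorm_smul, abs_of_pos (by norm_num : (0:ℝ) < (1/2 : ℝ))]
    have h : frobNorm (E * S) ≤ e * (3 * q * e) := by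
      calc frobNorm (E * S) ≤ frobNorm E * frobNorm S := frobNorm_mul _ _
        _ ≤ e * (3 * q * e) := by
            rw [← hedef]
            exact mul_le_mul_of_nonneg_left hSF he0
    linarith
  have hf3 : frobNorm ((1/2 : ℝ) • (X * (Eᵀ * E))) ≤ (1/2) * q * e ^ 2 := by
    rw [frobNorm_smul, abs_of_pos (by norm_num : (0:ℝ) < (1/2 : ℝ))]
    have h2 : frobNorm (Eᵀ * E) ≤ e * e := by
      have h := frobNorm_mul Eᵀ E
      rwa [frobNorm_transpose, ← hedef] at h
    have h1 : frobNorm (X * (Eᵀ * E)) ≤ q * (e * e) := by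
      calc frobNorm (X * (Eᵀ * E)) ≤ frobNorm X * frobNorm (Eᵀ * E) := frobNorm_mul _ _
        _ ≤ q * (e * e) := by
            rw [hXF]
            exact mul_le_mul_of_nonneg_left h2 hq0
    linarith
  have htri : frobNorm ((X + E) * (R⁻¹ - 1 + (1/2 : ℝ) • S)
        - (1/2 : ℝ) • (E * S) - (1/2 : ℝ) • (X * (Eᵀ * E)))
      ≤ frobNorm ((X + E) * (R⁻¹ - 1 + (1/2 : ℝ) • S))
        + frobNorm ((1/2 : ℝ) • (E * S)) + frobNorm ((1/2 : ℝ) • (X * (Eᵀ * E))) := by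
    have t1 := frobNorm_sub ((X + E) * (R⁻¹ - 1 + (1/2 : ℝ) • S) - (1/2 : ℝ) • (E * S))
      ((1/2 : ℝ) • (X * (Eᵀ * E)))
    have t2 := frobNorm_sub ((X + E) * (R⁻¹ - 1 + (1/2 : ℝ) • S)) ((1/2 : ℝ) • (E * S))
    linarith
  have hqp : q ≤ (p : ℝ) := by
    have h := mul_le_mul_of_nonneg_left hq1 hq0
    have h2 : q * q = q ^ 2 := by ring
    rw [mul_one] at h
    rw [h2, hq2] at h
    exact h
  have hq7 : q ^ 7 ≤ (p : ℝ) ^ 4 := by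
    have h : q ^ 7 = (p : ℝ) ^ 3 * q := by rw [← hq2]; ring
    rw [h]
    have h3 := mul_le_mul_of_nonneg_left hqp (pow_nonneg hp0.le 3)
    calc ((p:ℝ)) ^ 3 * q ≤ (p:ℝ) ^ 3 * p := h3
      _ = (p:ℝ) ^ 4 := by ring
  have hq17 : q ≤ q ^ 7 := by
    have h6 : (1:ℝ) ≤ q ^ 6 := one_le_pow₀ hq1
    calc q = q * 1 := by ring
      _ ≤ q * q ^ 6 := mul_le_mul_of_nonneg_left h6 hq0
      _ = q ^ 7 := by ring
  have he2 : (0:ℝ) ≤ e ^ 2 := sq_nonneg e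
  linarith [mul_le_mul_of_nonneg_right hq7 he2, mul_le_mul_of_nonneg_right hq17 he2]
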